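/- Let (s_n)_{n=1}^∞ be the summing basis of c₀, where s_n = e_1 + e_2 + … + e_n and (e_n) is the unit vector basis of c₀. Then bc₁((s_n)) = 1. -/

import Mathlib

open Filter Metric NormedSpace Set Topology

noncomputable section

variable {E : Type*} [NormedAddCommGroup E] [NormedSpace ℝ E]

/-- `f` is the sequence of coordinate functionals of the Schauder basis `x`:
every vector has an expansion along `x`, and such expansions are unique. -/
structure IsSchauderBasis (x : ℕ → E) (f : ℕ → E →L[ℝ] ℝ) : Prop where
  expand : ∀ v : E,
    Tendsto (fun n => ∑ i ∈ Finset.range n, f i v • x i) atTop (𝓝 v)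
  unique : ∀ (a : ℕ → ℝ) (v : E),
    Tendsto (fun n => ∑ i ∈ Finset.range n, a i • x i) atTop (𝓝 v) → ∀ i, a i = f i v

/-- the `n`-th basis projection `P_n`. -/
def basisProj (x : ℕ → E) (f : ℕ → E →L[ℝ] ℝ) (n : ℕ) : E →L[ℝ] E :=
  ∑ i ∈ Finset.range n, (f i).smulRight (x i)

/-- closed linear span of `{y i : i ≥ n}`. -/
def tailSpan (y : ℕ → E) (n : ℕ) : Submodule ℝ E :=
  (Submodule.span ℝ (y '' {i | n ≤ i})).topologicalClosure

/-- `‖g‖_n` : the norm of the restriction of `g` to the closed span of the tail of `y`. -/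
def tailNorm (y : ℕ → E) (g : E →L[ℝ] ℝ) (n : ℕ) : ℝ :=
  ‖g.comp (tailSpan y n).subtypeL‖

/-- the quantity `sh` measuring how far a basic sequence is from being shrinking. -/
def sh (y : ℕ → E) : ℝ :=
  sSup ((fun g : E →L[ℝ] ℝ => limsup (tailNorm y g) atTop) '' {g | ‖g‖ ≤ 1})

/-- non-symmetrised Hausdorff distance `d̂(A,B)`. -/
def hdist (A B : Set E) : ℝ := sSup ((fun a => infDist a B) '' A)

/-- ordinary distance between two sets. -/
def setDist (A B : Set E) : ℝ := sInf {d : ℝ | ∃ a ∈ A, ∃ b ∈ B, d = dist a b}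

/-- `ca` measures how far a sequence is from being norm-Cauchy. -/
def ca (z : ℕ → E) : ℝ :=
  ⨅ n : ℕ, sSup {d : ℝ | ∃ k, n ≤ k ∧ ∃ l, n ≤ l ∧ d = ‖z k - z l‖}

/-- measure of non-separability. -/
def sep (A : Set E) : ℝ :=
  sInf {ε : ℝ | 0 < ε ∧ ∃ C : Set E, C.Countable ∧ ∀ a ∈ A, ∃ c ∈ C, ‖a - c‖ ≤ ε}

/-- `V`: the closed linear span of the coordinate functionals. -/
def dualSpan (g : ℕ → E →L[ℝ] ℝ) : Submodule ℝ (StrongDual ℝ E) :=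
  (Submodule.span ℝ (Set.range g)).topologicalClosure

lemma mem_dualSpan (g : ℕ → E →L[ℝ] ℝ) (i : ℕ) : g i ∈ dualSpan g :=
  Submodule.le_topologicalClosure _ (Submodule.subset_span ⟨i, rfl⟩)

/-- the quantity `bc₁` measuring non-bounded-completeness. -/
def bc1 (y : ℕ → E) : ℝ :=
  sSup {c : ℝ | ∃ a : ℕ → ℝ,
    (∀ n, ‖∑ i ∈ Finset.range n, a i • y i‖ ≤ 1) ∧
    c = ca (fun n => ∑ i ∈ Finset.range n, a i • y i)}

/-- the quantity `bc₂`. -/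
def bc2 (y : ℕ → E) (g : ℕ → E →L[ℝ] ℝ) : ℝ :=
  sSup {c : ℝ | ∃ φ : ↥(dualSpan g) →L[ℝ] ℝ,
    @norm (↥(dualSpan g) →L[ℝ] ℝ)
      (@ContinuousLinearMap.hasOpNorm ℝ ℝ ↥(dualSpan g) ℝ _ _ _ _ _ _ (RingHom.id ℝ)) φ ≤ 1 ∧
    c = ca (fun n => ∑ i ∈ Finset.range n, φ ⟨g i, mem_dualSpan g i⟩ • y i)}

/-- the quantity `bc₃`. -/
def bc3 (y : ℕ → E) (g : ℕ → E →L[ℝ] ℝ) : ℝ :=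
  sSup {c : ℝ | ∃ Φ : StrongDual ℝ (StrongDual ℝ E), ‖Φ‖ ≤ 1 ∧
    c = ca (fun n => ∑ i ∈ Finset.range n, Φ (g i) • y i)}

/-- `α_Y(X)`: measures how well `Y` embeds isomorphically into `X`. -/
def alpha (Y X : Type*) [NormedAddCommGroup Y] [NormedSpace ℝ Y]
    [NormedAddCommGroup X] [NormedSpace ℝ X] : ℝ :=
  sSup {c : ℝ | ∃ T : Y →L[ℝ] X, ‖T‖ ≤ 1 ∧ ∀ y : Y, c * ‖y‖ ≤ ‖T y‖}

/-- `β_Y(X)`: measures how well `Y` embeds complementably into `X`. -/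
def beta (Y X : Type*) [NormedAddCommGroup Y] [NormedSpace ℝ Y]
    [NormedAddCommGroup X] [NormedSpace ℝ X] : ℝ :=
  sSup {c : ℝ | ∃ (A : X →L[ℝ] Y) (B : Y →L[ℝ] X),
    A.comp B = ContinuousLinearMap.id ℝ Y ∧ c * (‖A‖ * ‖B‖) ≤ 1}

/-- weak-star closure of a subset of the bidual. -/
def wstarClosure {X : Type*} [NormedAddCommGroup X] [NormedSpace ℝ X]
    (S : Set (StrongDual ℝ (StrongDual ℝ X))) : Set (StrongDual ℝ (StrongDual ℝ X)) :=
  {z | StrongDual.toWeakDual z ∈ closure (StrongDual.toWeakDual '' S)}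

/-- the measure of weak non-compactness `wk_X(A)`. -/
def wk (X : Type*) [NormedAddCommGroup X] [NormedSpace ℝ X] (A : Set X) : ℝ :=
  hdist (wstarClosure ((inclusionInDoubleDual ℝ X) '' A))
    (Set.range (inclusionInDoubleDual ℝ X))

/-- weak-star cluster points in the bidual of a sequence in `X`. -/
def wclust {X : Type*} [NormedAddCommGroup X] [NormedSpace ℝ X] (u : ℕ → X) :
    Set (StrongDual ℝ (StrongDual ℝ X)) :=
  {z | MapClusterPt (StrongDual.toWeakDual z) atTop
      (fun n => StrongDual.toWeakDual (inclusionInDoubleDual ℝ X (u n)))}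

/-- the measure of weak non-compactness `wck_X(A)`. -/
def wck (X : Type*) [NormedAddCommGroup X] [NormedSpace ℝ X] (A : Set X) : ℝ :=
  sSup {c : ℝ | ∃ u : ℕ → X, (∀ n, u n ∈ A) ∧
    c = setDist (wclust u) (Set.range (inclusionInDoubleDual ℝ X))}


/-- the canonical map `j : X → V*` for a subspace `V` of the dual,
`⟨j v, x*⟩ = x*(v)`. -/
def jfun {X : Type*} [NormedAddCommGroup X] [NormedSpace ℝ X]
    (V : Submodule ℝ (StrongDual ℝ X)) (v : X) : ↥V →L[ℝ] ℝ :=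
  (inclusionInDoubleDual ℝ X v).comp V.subtypeL

/-- the space `ℓ₁` of absolutely summable real sequences. -/
abbrev ell1 : Type := lp (fun _ : ℕ => ℝ) 1

/-- the space `c₀` of real sequences converging to zero, with the sup norm. -/
abbrev czero : Type := ZeroAtInftyContinuousMap ℕ ℝ

end

/-- the summing basis of `c₀`: `summingBasis n = e₁ + ⋯ + e_{n+1}` has its first `n+1`
coordinates equal to `1` and the remaining ones equal to `0`. -/
def summingBasis (n : ℕ) : czero :=
  ⟨⟨fun k => if k ≤ n then (1 : ℝ) else 0, continuous_of_discreteTopology⟩, by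
    rw [cocompact_eq_atTop]
    refine Tendsto.congr' ?_ tendsto_const_nhds
    filter_upwards [eventually_ge_atTop (n + 1)] with k hk
    simp [(Nat.lt_of_succ_le hk).not_ge]⟩

namespace Bc1Aux

open Filter Metric NormedSpace Set Topology

noncomputable def evalHom (j : ℕ) : czero →+ ℝ where
  toFun f := f j
  map_zero' := rfl
  map_add' _ _ := rfl

lemma abs_apply_le_norm (f : czero) (j : ℕ) : |f j| ≤ ‖f‖ := by
  simpa using f.toBCF.norm_coe_le_norm j

lemma norm_le_of_forall (f : czero) {C : ℝ} (hC : 0 ≤ C) (h : ∀ j, |f j| ≤ C) : ‖f‖ ≤ C := by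
  rw [← ZeroAtInftyContinuousMap.norm_toBCF_eq_norm]
  exact (BoundedContinuousFunction.norm_le hC).2 (by simpa using h)

lemma partial_apply (a : ℕ → ℝ) (n j : ℕ) :
    (∑ i ∈ Finset.range n, a i • summingBasis i) j = ∑ i ∈ Finset.Ico j n, a i := by
  have h1 : (∑ i ∈ Finset.range n, a i • summingBasis i) j
      = ∑ i ∈ Finset.range n, (a i • summingBasis i) j := map_sum (evalHom j) _ _
  have h2 : ∀ i ∈ Finset.range n, (a i • summingBasis i) j = if j ≤ i then a i else 0 := by
    intro i _
    simp only [ZeroAtInftyContinuousMap.coe_smul, Pi.smul_apply, smul_eq_mul]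
    simp [summingBasis, mul_ite]
  rw [h1, Finset.sum_congr rfl h2, ← Finset.sum_filter]
  congr 1
  ext i
  simp only [Finset.mem_filter, Finset.mem_range, Finset.mem_Ico]
  omega

/-- For any admissible coefficient sequence, all differences of partial sums
have norm at most `1`. -/
lemma diff_norm_le (a : ℕ → ℝ)
    (h : ∀ n, ‖∑ i ∈ Finset.range n, a i • summingBasis i‖ ≤ 1) (k l : ℕ) :
    ‖(∑ i ∈ Finset.range k, a i • summingBasis i)
      - ∑ i ∈ Finset.range l, a i • summingBasis i‖ ≤ 1 := by
  -- wlog l ≤ k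
  have key : ∀ {l k : ℕ}, l ≤ k → ‖(∑ i ∈ Finset.range k, a i • summingBasis i)
      - ∑ i ∈ Finset.range l, a i • summingBasis i‖ ≤ 1 := by
    intro l k hlk
    apply norm_le_of_forall _ zero_le_one
    intro j
    have hcoord : ((∑ i ∈ Finset.range k, a i • summingBasis i)
        - ∑ i ∈ Finset.range l, a i • summingBasis i) j
        = ∑ i ∈ Finset.Ico (max j l) k, a i := by
      simp only [ZeroAtInftyContinuousMap.coe_sub, Pi.sub_apply, partial_apply]
      rcases le_total l j with hj | hj
      · rw [max_eq_left hj, Finset.Ico_eq_empty (by omega : ¬ j < l), Finset.sum_empty, sub_zero]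
      · rw [max_eq_right hj, ← Finset.sum_Ico_consecutive a hj hlk, add_sub_cancel_left]
    rw [hcoord, ← partial_apply a k (max j l)]
    exact le_trans (abs_apply_le_norm _ _) (h k)
  rcases le_total l k with h' | h'
  · exact key h'
  · rw [norm_sub_rev]; exact key h'

lemma ca_le_one (z : ℕ → czero) (h : ∀ k l, ‖z k - z l‖ ≤ 1) : ca z ≤ 1 := by
  have hmem : ∀ n, (0:ℝ) ∈ {d : ℝ | ∃ k, n ≤ k ∧ ∃ l, n ≤ l ∧ d = ‖z k - z l‖} :=
    fun n => ⟨n, le_rfl, n, le_rfl, by simp⟩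
  have hbdd : ∀ n, ∀ d ∈ {d : ℝ | ∃ k, n ≤ k ∧ ∃ l, n ≤ l ∧ d = ‖z k - z l‖}, d ≤ 1 := by
    rintro n d ⟨k, _, l, _, rfl⟩; exact h k l
  have hsle : ∀ n, sSup {d : ℝ | ∃ k, n ≤ k ∧ ∃ l, n ≤ l ∧ d = ‖z k - z l‖} ≤ 1 :=
    fun n => csSup_le ⟨0, hmem n⟩ (hbdd n)
  have hbelow : BddBelow (Set.range fun n =>
      sSup {d : ℝ | ∃ k, n ≤ k ∧ ∃ l, n ≤ l ∧ d = ‖z k - z l‖}) := by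
    refine ⟨0, ?_⟩
    rintro x ⟨n, rfl⟩
    exact le_csSup ⟨1, hbdd n⟩ (hmem n)
  exact le_trans (ciInf_le hbelow 0) (hsle 0)

end Bc1Aux

/-- for the summing basis `(sₙ)` of `c₀`, `bc₁((sₙ)) = 1`. -/
theorem bc1_summingBasis_c0 : bc1 summingBasis = 1 := by
  classical
  set S : Set ℝ := {c : ℝ | ∃ a : ℕ → ℝ,
    (∀ n, ‖∑ i ∈ Finset.range n, a i • summingBasis i‖ ≤ 1) ∧
    c = ca (fun n => ∑ i ∈ Finset.range n, a i • summingBasis i)} with hS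
  have hub : ∀ c ∈ S, c ≤ 1 := by
    rintro c ⟨a, ha, rfl⟩
    exact Bc1Aux.ca_le_one _ (Bc1Aux.diff_norm_le a ha)
  -- the alternating sequence
  set a : ℕ → ℝ := fun i => (-1 : ℝ) ^ i with haa
  have hIco : ∀ j n : ℕ, |∑ i ∈ Finset.Ico j n, a i| ≤ 1 := by
    intro j n
    rcases le_total n j with hnj | hjn
    · rw [Finset.Ico_eq_empty (by omega), Finset.sum_empty]; norm_num
    · rw [Finset.sum_Ico_eq_sub _ hjn]
      simp only [haa, neg_one_geom_sum]
      split_ifs <;> norm_num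
  have hnorm : ∀ n, ‖∑ i ∈ Finset.range n, a i • summingBasis i‖ ≤ 1 := by
    intro n
    apply Bc1Aux.norm_le_of_forall _ zero_le_one
    intro j
    rw [Bc1Aux.partial_apply]
    exact hIco j n
  have hsb : ∀ n : ℕ, ‖summingBasis n‖ = 1 := by
    intro n
    refine le_antisymm (Bc1Aux.norm_le_of_forall _ zero_le_one ?_) ?_
    · intro j; simp only [summingBasis]
      by_cases hj : j ≤ n <;> simp [summingBasis, hj]
    · have := Bc1Aux.abs_apply_le_norm (summingBasis n) 0
      simpa [summingBasis] using this
  have hdiff1 : ∀ n : ℕ, ‖(∑ i ∈ Finset.range (n+1), a i • summingBasis i)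
      - ∑ i ∈ Finset.range n, a i • summingBasis i‖ = 1 := by
    intro n
    rw [Finset.sum_range_succ, add_sub_cancel_left]
    rcases Nat.even_or_odd n with h | h
    · simp [haa, h.neg_one_pow, one_smul, hsb n]
    · have e : ((-1 : ℝ)) • summingBasis n = -(summingBasis n) := by
        ext j; simp
      simp only [haa, h.neg_one_pow, e, norm_neg]
      exact hsb n
  have hca : ca (fun n => ∑ i ∈ Finset.range n, a i • summingBasis i) = 1 := by
    refine le_antisymm (Bc1Aux.ca_le_one _ (Bc1Aux.diff_norm_le a hnorm)) ?_
    refine le_ciInf fun n => ?_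
    refine le_csSup ?_ ⟨n+1, by omega, n, le_rfl, (hdiff1 n).symm⟩
    refine ⟨1, ?_⟩
    rintro d ⟨k, _, l, _, rfl⟩
    exact Bc1Aux.diff_norm_le a hnorm k l
  have hmem : (1 : ℝ) ∈ S := ⟨a, hnorm, hca.symm⟩
  exact le_antisymm (csSup_le ⟨1, hmem⟩ hub) (le_csSup ⟨1, hub⟩ hmem)
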